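/- Let (S_i)_{i=0}^m be a supermartingale with increments X_i = S_i − S_{i−1} with respect to a filtration (ℱ_i), suppose |X_i| ≤ R almost surely for all i, and let V(k) = Σ_{i=1}^{k} E[X_i² | ℱ_{i−1}]. Then for every α, β > 0, the probability that there exists k ≤ m with S_k − S_0 ≥ α and V(k) ≤ β is at most exp(−α²/(2(β + Rα))). -/

import Mathlib

open MeasureTheory


lemma hd1 (u : ℝ) : HasDerivAt (fun u : ℝ => Real.exp u - (1 + u + u^2/2)) (Real.exp u - (1 + u)) u := by
  have h2 : HasDerivAt (fun u : ℝ => u^2/2) u u := by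
    have := (hasDerivAt_pow 2 u).div_const 2
    exact this.congr_deriv (by norm_num)
  have h1 : HasDerivAt (fun u : ℝ => 1 + u + u^2/2) (0 + 1 + u) u :=
    ((hasDerivAt_const u (1:ℝ)).add (hasDerivAt_id u)).add h2
  have := (Real.hasDerivAt_exp u).sub h1
  exact this.congr_deriv (by ring)

lemma expBound1 (t : ℝ) (ht : t ≤ 0) : Real.exp t ≤ 1 + t + t^2/2 := by
  have hmono : MonotoneOn (fun u : ℝ => Real.exp u - (1 + u + u^2/2)) (Set.Iic 0) := by
    apply monotoneOn_of_deriv_nonneg (convex_Iic 0)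
    · fun_prop
    · fun_prop
    · intro u hu
      rw [interior_Iic] at hu
      rw [(hd1 u).deriv]
      have := Real.add_one_le_exp u
      linarith
  have := hmono (Set.mem_Iic.2 ht) (Set.mem_Iic.2 le_rfl) ht
  simp only [Real.exp_zero] at this
  norm_num at this
  linarith

lemma hd2 (u : ℝ) : HasDerivAt (fun u : ℝ => u^2/2 - (1-u)*(Real.exp u - 1 - u)) (u * (Real.exp u - 1)) u := by
  have ha : HasDerivAt (fun u : ℝ => 1 - u) (-1) u := by
    have := (hasDerivAt_const u (1:ℝ)).sub (hasDerivAt_id u)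
    exact this.congr_deriv (by norm_num)
  have hb : HasDerivAt (fun u : ℝ => Real.exp u - 1 - u) (Real.exp u - 1) u := by
    have := ((Real.hasDerivAt_exp u).sub (hasDerivAt_const u 1)).sub (hasDerivAt_id u)
    exact this.congr_deriv (by norm_num)
  have h2 : HasDerivAt (fun u : ℝ => u^2/2) u u := by
    have := (hasDerivAt_pow 2 u).div_const 2
    exact this.congr_deriv (by norm_num)
  have := h2.sub (ha.mul hb)
  exact this.congr_deriv (by ring)

lemma expBound2 (t : ℝ) (ht0 : 0 ≤ t) (ht1 : t < 1) : Real.exp t ≤ 1 + t + t^2/(2*(1-t)) := by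
  have hmono : MonotoneOn (fun u : ℝ => u^2/2 - (1-u)*(Real.exp u - 1 - u)) (Set.Ici 0) := by
    apply monotoneOn_of_deriv_nonneg (convex_Ici 0)
    · fun_prop
    · fun_prop
    · intro u hu
      rw [interior_Ici] at hu
      rw [(hd2 u).deriv]
      have hu' : 0 < u := Set.mem_Ioi.1 hu
      have h1 : (1:ℝ) ≤ Real.exp u := Real.one_le_exp (le_of_lt hu')
      nlinarith
  have := hmono (Set.mem_Ici.2 le_rfl) (Set.mem_Ici.2 ht0) ht0
  simp only [Real.exp_zero] at this
  norm_num at this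
  have h1t : (0:ℝ) < 1 - t := by linarith
  have h2 : Real.exp t - 1 - t ≤ t^2/2/(1-t) := (le_div_iff₀ h1t).2 (by nlinarith)
  have h3 : t^2/2/(1-t) = t^2/(2*(1-t)) := by rw [div_div]
  linarith

lemma expBound (l R x : ℝ) (hl : 0 ≤ l) (hlR0 : 0 ≤ l*R) (hlR : l*R < 1) (hx : x ≤ R) :
    Real.exp (l*x) ≤ 1 + l*x + l^2/(2*(1-l*R)) * x^2 := by
  have h1R : (0:ℝ) < 1 - l*R := by linarith
  have hkey : l^2/(2*(1-l*R)) * x^2 = (l*x)^2/(2*(1-l*R)) := by ring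
  rw [hkey]
  rcases le_or_gt (l*x) 0 with h | h
  · have := expBound1 (l*x) h
    have : (l*x)^2/2 ≤ (l*x)^2/(2*(1-l*R)) := by
      apply div_le_div_of_nonneg_left (sq_nonneg _) (by positivity)
      nlinarith [hlR0]
    linarith [expBound1 (l*x) h]
  · have hlx : l*x ≤ l*R := mul_le_mul_of_nonneg_left hx hl
    have := expBound2 (l*x) h.le (lt_of_le_of_lt hlx hlR)
    have h2 : (l*x)^2/(2*(1-l*x)) ≤ (l*x)^2/(2*(1-l*R)) := by
      apply div_le_div_of_nonneg_left (sq_nonneg _) (by positivity)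
      nlinarith
    linarith


lemma supermax {Ω : Type*} {m0 : MeasurableSpace Ω} (μ : Measure Ω) [IsProbabilityMeasure μ]
    (ℱ : Filtration ℕ m0) (Z : ℕ → Ω → ℝ) (hZ : Supermartingale Z ℱ μ)
    (hpos : ∀ k ω, 0 ≤ Z k ω) (m : ℕ) (a : ℝ) (ha : 0 < a) :
    a * (μ {ω | ∃ k ≤ m, a ≤ Z k ω}).toReal ≤ ∫ ω, Z 0 ω ∂μ := by
  set T := (fun ω => ((hittingBtwn Z (Set.Ici a) 0 m ω : ℕ) : WithTop ℕ)) with hTdef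
  have hT : IsStoppingTime ℱ T := Adapted.isStoppingTime_hittingBtwn hZ.stronglyAdapted.adapted measurableSet_Ici
  have hsupst : Supermartingale (MeasureTheory.stoppedProcess Z T) ℱ μ := by
    have h1 : Submartingale (-Z) ℱ μ := hZ.neg
    have h2 := h1.stoppedProcess hT
    have h3 : MeasureTheory.stoppedProcess (-Z) T = -(MeasureTheory.stoppedProcess Z T) := by
      funext n ω
      simp [MeasureTheory.stoppedProcess]
    rw [h3] at h2
    have := h2.neg
    rwa [neg_neg] at this
  have hEmeas : MeasurableSet {ω | ∃ k ≤ m, a ≤ Z k ω} := by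
    have : {ω | ∃ k ≤ m, a ≤ Z k ω} = ⋃ k ∈ Finset.range (m+1), (Z k) ⁻¹' (Set.Ici a) := by
      ext ω
      simp [Finset.mem_range, Nat.lt_succ_iff]
    rw [this]
    refine MeasurableSet.biUnion (Set.to_countable _) fun k _ => ?_
    exact ((hZ.stronglyAdapted k).mono (ℱ.le k)).measurable measurableSet_Ici
  have hmem : ∀ ω ∈ {ω | ∃ k ≤ m, a ≤ Z k ω}, a ≤ MeasureTheory.stoppedProcess Z T m ω := by
    rintro ω ⟨k, hk, hak⟩
    have hex : ∃ j ∈ Set.Icc 0 m, Z j ω ∈ Set.Ici a := ⟨k, ⟨Nat.zero_le k, hk⟩, hak⟩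
    have hTm : T ω ≤ m := WithTop.coe_le_coe.2 (hittingBtwn_le ω)
    rw [MeasureTheory.stoppedProcess_eq_of_ge (u := Z) (i := m) hTm]
    exact stoppedValue_hittingBtwn_mem hex
  have hint : Integrable (MeasureTheory.stoppedProcess Z T m) μ := hsupst.integrable m
  calc a * (μ {ω | ∃ k ≤ m, a ≤ Z k ω}).toReal
      ≤ ∫ ω in {ω | ∃ k ≤ m, a ≤ Z k ω}, MeasureTheory.stoppedProcess Z T m ω ∂μ :=
        by have := setIntegral_ge_of_const_le hEmeas (measure_ne_top _ _) hmem hint.integrableOn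
           rw [smul_eq_mul, mul_comm] at this; exact this
    _ ≤ ∫ ω, MeasureTheory.stoppedProcess Z T m ω ∂μ :=
        setIntegral_le_integral hint (Filter.Eventually.of_forall fun ω => by
          simp only [Pi.zero_apply, MeasureTheory.stoppedProcess]; exact hpos _ _)
    _ ≤ ∫ ω, MeasureTheory.stoppedProcess Z T 0 ω ∂μ := by
        have := hsupst.setIntegral_le (Nat.zero_le m) (MeasurableSet.univ : MeasurableSet[ℱ 0] Set.univ)
        simpa [setIntegral_univ] using this
    _ = ∫ ω, Z 0 ω ∂μ := by
        congr 1

lemma freedman_supermartingale {Ω : Type*} {m0 : MeasurableSpace Ω} (μ : Measure Ω)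
    [IsProbabilityMeasure μ] (S : ℕ → Ω → ℝ) (ℱ : Filtration ℕ m0)
    (hS : Supermartingale S ℱ μ) (R : ℝ) (hR : 0 < R)
    (hbdd : ∀ i, ∀ᵐ ω ∂μ, |S (i + 1) ω - S i ω| ≤ R)
    (l c : ℝ) (hl : 0 < l) (hlR : l * R < 1) (hc : c = l^2/(2*(1-l*R))) :
    Supermartingale (fun k ω => Real.exp (l * (S k ω - S 0 ω) -
      c * ∑ i ∈ Finset.range k, (μ[fun ω' => (S (i + 1) ω' - S i ω') ^ 2|ℱ i]) ω)) ℱ μ := by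
  have hlR0 : 0 ≤ l * R := le_of_lt (mul_pos hl hR)
  have h1R : (0:ℝ) < 1 - l * R := by linarith
  have hc0 : 0 < c := by rw [hc]; positivity
  have hXmeas : ∀ i, StronglyMeasurable[ℱ (i+1)] (fun ω => S (i+1) ω - S i ω) :=
    fun i => (hS.stronglyAdapted (i+1)).sub ((hS.stronglyAdapted i).mono (ℱ.mono (Nat.le_succ i)))
  have hXint : ∀ i, Integrable (fun ω => S (i+1) ω - S i ω) μ :=
    fun i => (hS.integrable (i+1)).sub (hS.integrable i)
  have hX2meas : ∀ i, StronglyMeasurable[ℱ (i+1)] (fun ω => (S (i+1) ω - S i ω)^2) :=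
    fun i => (hXmeas i).pow 2
  have hX2int : ∀ i, Integrable (fun ω => (S (i+1) ω - S i ω)^2) μ := by
    intro i
    refine Integrable.mono' (integrable_const (R^2))
      (((hX2meas i).mono (ℱ.le _)).aestronglyMeasurable) ?_
    filter_upwards [hbdd i] with ω h
    rw [Real.norm_eq_abs, abs_of_nonneg (sq_nonneg _)]
    calc (S (i+1) ω - S i ω)^2 = |S (i+1) ω - S i ω|^2 := (sq_abs _).symm
      _ ≤ R^2 := by nlinarith [abs_nonneg (S (i+1) ω - S i ω)]
  have hWnn : ∀ i, (0:Ω → ℝ) ≤ᵐ[μ] μ[fun ω' => (S (i + 1) ω' - S i ω') ^ 2|ℱ i] :=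
    fun i => condExp_nonneg (Filter.Eventually.of_forall fun ω => sq_nonneg _)
  have hae : ∀ᵐ ω ∂μ, ∀ i, |S (i+1) ω - S i ω| ≤ R ∧
      0 ≤ (μ[fun ω' => (S (i + 1) ω' - S i ω') ^ 2|ℱ i]) ω := by
    rw [MeasureTheory.ae_all_iff]
    intro i
    filter_upwards [hbdd i, hWnn i] with ω h1 h2 using ⟨h1, h2⟩
  have hZle : ∀ k, ∀ᵐ ω ∂μ, Real.exp (l * (S k ω - S 0 ω) -
      c * ∑ i ∈ Finset.range k, (μ[fun ω' => (S (i + 1) ω' - S i ω') ^ 2|ℱ i]) ω)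
      ≤ Real.exp (l * ((k:ℝ) * R)) := by
    intro k
    filter_upwards [hae] with ω h
    apply Real.exp_le_exp.2
    have hsum : S k ω - S 0 ω = ∑ i ∈ Finset.range k, (S (i+1) ω - S i ω) :=
      (Finset.sum_range_sub (fun i => S i ω) k).symm
    have h1 : S k ω - S 0 ω ≤ (k:ℝ) * R := by
      rw [hsum]
      calc ∑ i ∈ Finset.range k, (S (i+1) ω - S i ω) ≤ ∑ _i ∈ Finset.range k, R :=
            Finset.sum_le_sum fun i _ => le_trans (le_abs_self _) (h i).1
        _ = (k:ℝ) * R := by simp [mul_comm]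
    have h2 : 0 ≤ ∑ i ∈ Finset.range k, (μ[fun ω' => (S (i + 1) ω' - S i ω') ^ 2|ℱ i]) ω :=
      Finset.sum_nonneg fun i _ => (h i).2
    nlinarith [mul_le_mul_of_nonneg_left h1 (le_of_lt hl)]
  have hZmeas : ∀ k, StronglyMeasurable[ℱ k] (fun ω => Real.exp (l * (S k ω - S 0 ω) -
      c * ∑ i ∈ Finset.range k, (μ[fun ω' => (S (i + 1) ω' - S i ω') ^ 2|ℱ i]) ω)) := by
    intro k
    apply Real.continuous_exp.comp_stronglyMeasurable
    apply StronglyMeasurable.sub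
    · exact ((hS.stronglyAdapted k).sub ((hS.stronglyAdapted 0).mono (ℱ.mono (Nat.zero_le k)))).const_mul l
    · refine StronglyMeasurable.const_mul ?_ c
      refine Finset.stronglyMeasurable_fun_sum _ fun i hi => ?_
      exact stronglyMeasurable_condExp.mono (ℱ.mono (le_of_lt (Finset.mem_range.1 hi)))
  have hZint : ∀ k, Integrable (fun ω => Real.exp (l * (S k ω - S 0 ω) -
      c * ∑ i ∈ Finset.range k, (μ[fun ω' => (S (i + 1) ω' - S i ω') ^ 2|ℱ i]) ω)) μ := by
    intro k
    refine Integrable.mono' (integrable_const (Real.exp (l * ((k:ℝ) * R))))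
      ((hZmeas k).mono (ℱ.le k)).aestronglyMeasurable ?_
    filter_upwards [hZle k] with ω h
    rwa [Real.norm_eq_abs, abs_of_nonneg (Real.exp_nonneg _)]
  refine supermartingale_nat hZmeas hZint ?_
  intro k
  show μ[(fun ω => Real.exp (l * (S (k+1) ω - S 0 ω) -
      c * ∑ i ∈ Finset.range (k+1), (μ[fun ω' => (S (i + 1) ω' - S i ω') ^ 2|ℱ i]) ω))|ℱ k]
      ≤ᵐ[μ] (fun ω => Real.exp (l * (S k ω - S 0 ω) -
      c * ∑ i ∈ Finset.range k, (μ[fun ω' => (S (i + 1) ω' - S i ω') ^ 2|ℱ i]) ω))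
  have hfactor : (fun ω => Real.exp (l * (S (k+1) ω - S 0 ω) -
      c * ∑ i ∈ Finset.range (k+1), (μ[fun ω' => (S (i + 1) ω' - S i ω') ^ 2|ℱ i]) ω)) =
      (fun ω => (Real.exp (l * (S k ω - S 0 ω) -
        c * ∑ i ∈ Finset.range k, (μ[fun ω' => (S (i + 1) ω' - S i ω') ^ 2|ℱ i]) ω) *
        Real.exp (-(c * (μ[fun ω' => (S (k + 1) ω' - S k ω') ^ 2|ℱ k]) ω))) *
        Real.exp (l * (S (k+1) ω - S k ω))) := by
    funext ω
    rw [← Real.exp_add, ← Real.exp_add]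
    congr 1
    rw [Finset.sum_range_succ]
    ring
  have hGmeas : StronglyMeasurable[ℱ k] (fun ω => Real.exp (l * (S k ω - S 0 ω) -
      c * ∑ i ∈ Finset.range k, (μ[fun ω' => (S (i + 1) ω' - S i ω') ^ 2|ℱ i]) ω) *
      Real.exp (-(c * (μ[fun ω' => (S (k + 1) ω' - S k ω') ^ 2|ℱ k]) ω))) := by
    refine (hZmeas k).mul ?_
    exact Real.continuous_exp.comp_stronglyMeasurable
      ((stronglyMeasurable_condExp.const_mul c).neg)
  have hGbdd : ∀ᵐ ω ∂μ, ‖Real.exp (l * (S k ω - S 0 ω) -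
      c * ∑ i ∈ Finset.range k, (μ[fun ω' => (S (i + 1) ω' - S i ω') ^ 2|ℱ i]) ω) *
      Real.exp (-(c * (μ[fun ω' => (S (k + 1) ω' - S k ω') ^ 2|ℱ k]) ω))‖
      ≤ Real.exp (l * ((k:ℝ) * R)) := by
    filter_upwards [hZle k, hWnn k] with ω h1 h2
    rw [Real.norm_eq_abs, abs_of_nonneg (by positivity)]
    have h3 : Real.exp (-(c * (μ[fun ω' => (S (k + 1) ω' - S k ω') ^ 2|ℱ k]) ω)) ≤ 1 := by
      rw [Real.exp_le_one_iff]
      simp only [Pi.zero_apply] at h2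
      nlinarith
    nlinarith [Real.exp_pos (l * (S k ω - S 0 ω) -
      c * ∑ i ∈ Finset.range k, (μ[fun ω' => (S (i + 1) ω' - S i ω') ^ 2|ℱ i]) ω),
      Real.exp_pos (-(c * (μ[fun ω' => (S (k + 1) ω' - S k ω') ^ 2|ℱ k]) ω))]
  have hExint : Integrable (fun ω => Real.exp (l * (S (k+1) ω - S k ω))) μ := by
    refine Integrable.mono' (integrable_const (Real.exp (l * R)))
      (Real.continuous_exp.comp_stronglyMeasurable
        (((hXmeas k).mono (ℱ.le _)).const_mul l)).aestronglyMeasurable ?_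
    filter_upwards [hbdd k] with ω h
    rw [Real.norm_eq_abs, abs_of_nonneg (Real.exp_nonneg _)]
    apply Real.exp_le_exp.2
    exact mul_le_mul_of_nonneg_left (le_trans (le_abs_self _) h) (le_of_lt hl)
  have h1 : μ[(fun ω => Real.exp (l * (S (k+1) ω - S 0 ω) -
      c * ∑ i ∈ Finset.range (k+1), (μ[fun ω' => (S (i + 1) ω' - S i ω') ^ 2|ℱ i]) ω))|ℱ k]
      =ᵐ[μ] fun ω => (Real.exp (l * (S k ω - S 0 ω) -
        c * ∑ i ∈ Finset.range k, (μ[fun ω' => (S (i + 1) ω' - S i ω') ^ 2|ℱ i]) ω) *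
        Real.exp (-(c * (μ[fun ω' => (S (k + 1) ω' - S k ω') ^ 2|ℱ k]) ω))) *
        (μ[(fun ω' => Real.exp (l * (S (k+1) ω' - S k ω')))|ℱ k]) ω := by
    rw [hfactor]
    exact condExp_stronglyMeasurable_mul_of_bound (ℱ.le k) hGmeas hExint _ hGbdd
  -- integrability of the quadratic majorant
  have hQ1int : Integrable (fun ω => 1 + l * (S (k+1) ω - S k ω)) μ :=
    (integrable_const (1:ℝ)).add ((hXint k).const_mul l)
  have hQ2int : Integrable (fun ω => c * (S (k+1) ω - S k ω)^2) μ := (hX2int k).const_mul c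
  have hQint : Integrable (fun ω => 1 + l * (S (k+1) ω - S k ω) + c * (S (k+1) ω - S k ω)^2) μ :=
    hQ1int.add hQ2int
  have h2 : μ[(fun ω' => Real.exp (l * (S (k+1) ω' - S k ω')))|ℱ k] ≤ᵐ[μ]
      μ[(fun ω => 1 + l * (S (k+1) ω - S k ω) + c * (S (k+1) ω - S k ω)^2)|ℱ k] := by
    refine condExp_mono hExint hQint ?_
    filter_upwards [hbdd k] with ω h
    have := expBound l R (S (k+1) ω - S k ω) (le_of_lt hl) hlR0 hlR
      (le_trans (le_abs_self _) h)
    rw [hc]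
    linarith
  have h3 : μ[(fun ω => 1 + l * (S (k+1) ω - S k ω) + c * (S (k+1) ω - S k ω)^2)|ℱ k] =ᵐ[μ]
      fun ω => 1 + l * (μ[(fun ω' => S (k+1) ω' - S k ω')|ℱ k]) ω +
        c * (μ[fun ω' => (S (k + 1) ω' - S k ω') ^ 2|ℱ k]) ω := by
    refine (condExp_add hQ1int hQ2int (ℱ k)).trans ?_
    have ha : μ[(fun ω => 1 + l * (S (k+1) ω - S k ω))|ℱ k] =ᵐ[μ]
        fun ω => 1 + l * (μ[(fun ω' => S (k+1) ω' - S k ω')|ℱ k]) ω := by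
      refine (condExp_add (integrable_const (1:ℝ)) ((hXint k).const_mul l) (ℱ k)).trans ?_
      have hb : μ[(fun _ : Ω => (1:ℝ))|ℱ k] = fun _ => 1 := condExp_const (ℱ.le k) 1
      have hcc : μ[(fun ω => l * (S (k+1) ω - S k ω))|ℱ k] =ᵐ[μ]
          fun ω => l * (μ[(fun ω' => S (k+1) ω' - S k ω')|ℱ k]) ω :=
        condExp_smul l (fun ω' => S (k+1) ω' - S k ω') (ℱ k)
      filter_upwards [hcc] with ω hω
      simp only [Pi.add_apply, hb, hω]
    have hd : μ[(fun ω => c * (S (k+1) ω - S k ω)^2)|ℱ k] =ᵐ[μ]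
        fun ω => c * (μ[fun ω' => (S (k + 1) ω' - S k ω') ^ 2|ℱ k]) ω :=
      condExp_smul c (fun ω' => (S (k+1) ω' - S k ω')^2) (ℱ k)
    filter_upwards [ha, hd] with ω hω1 hω2
    simp only [Pi.add_apply, hω1, hω2]
  have hXcond : μ[(fun ω' => S (k+1) ω' - S k ω')|ℱ k] ≤ᵐ[μ] 0 := by
    have ha : μ[(fun ω' => S (k+1) ω' - S k ω')|ℱ k] =ᵐ[μ] μ[S (k+1)|ℱ k] - μ[S k|ℱ k] :=
      condExp_sub (hS.integrable (k+1)) (hS.integrable k) (ℱ k)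
    have hb : μ[S k|ℱ k] = S k :=
      condExp_of_stronglyMeasurable (ℱ.le k) (hS.stronglyAdapted k) (hS.integrable k)
    have hcnd := hS.2.1 k (k+1) (Nat.le_succ k)
    filter_upwards [ha, hcnd] with ω h1 h2
    rw [Pi.zero_apply, h1, Pi.sub_apply, hb]
    linarith
  refine h1.trans_le ?_
  filter_upwards [h2, h3, hWnn k, hXcond] with ω hω2 hω3 hWk hXc
  simp only [Pi.zero_apply] at hWk hXc
  set A := Real.exp (l * (S k ω - S 0 ω) -
    c * ∑ i ∈ Finset.range k, (μ[fun ω' => (S (i + 1) ω' - S i ω') ^ 2|ℱ i]) ω) with hA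
  set W := (μ[fun ω' => (S (k + 1) ω' - S k ω') ^ 2|ℱ k]) ω with hWd
  set E := (μ[(fun ω' => Real.exp (l * (S (k+1) ω' - S k ω')))|ℱ k]) ω with hE
  set CX := (μ[(fun ω' => S (k+1) ω' - S k ω')|ℱ k]) ω with hCX
  have hApos : 0 < A := Real.exp_pos _
  have hexp : 0 < Real.exp (-(c * W)) := Real.exp_pos _
  have hEle : E ≤ 1 + c * W := by
    rw [hω3] at hω2
    nlinarith
  have hkey : Real.exp (-(c * W)) * (1 + c * W) ≤ 1 := by
    rw [Real.exp_neg, inv_mul_le_iff₀ (Real.exp_pos _), mul_one]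
    linarith [Real.add_one_le_exp (c * W)]
  calc A * Real.exp (-(c * W)) * E ≤ A * Real.exp (-(c * W)) * (1 + c * W) := by
        exact mul_le_mul_of_nonneg_left hEle (by positivity)
    _ = A * (Real.exp (-(c * W)) * (1 + c * W)) := by ring
    _ ≤ A * 1 := mul_le_mul_of_nonneg_left hkey (le_of_lt hApos)
    _ = A := mul_one A

theorem stmt_7 {Ω : Type*} {m0 : MeasurableSpace Ω} (μ : Measure Ω) [IsProbabilityMeasure μ]
    (m : ℕ) (S : ℕ → Ω → ℝ) (ℱ : Filtration ℕ m0)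
    (hS : Supermartingale S ℱ μ)
    (R : ℝ) (hR : 0 < R)
    (hbdd : ∀ i, ∀ᵐ ω ∂μ, |S (i + 1) ω - S i ω| ≤ R)
    (α β : ℝ) (hα : 0 < α) (hβ : 0 < β) :
    (μ {ω | ∃ k ≤ m, α ≤ S k ω - S 0 ω ∧
        (∑ i ∈ Finset.range k,
          (μ[fun ω' => (S (i + 1) ω' - S i ω') ^ 2 | ℱ i]) ω) ≤ β}).toReal
      ≤ Real.exp (-α ^ 2 / (2 * (β + R * α))) := by
  have hβRα : (0:ℝ) < β + R * α := by positivity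
  set l : ℝ := α / (β + R * α) with hl_def
  have hl : 0 < l := div_pos hα hβRα
  have hlR : l * R < 1 := by
    rw [hl_def, div_mul_eq_mul_div, div_lt_one hβRα]
    nlinarith
  set c : ℝ := l^2/(2*(1-l*R)) with hc_def
  have h1R : (0:ℝ) < 1 - l * R := by linarith
  have hc0 : 0 < c := by rw [hc_def]; positivity
  set a : ℝ := Real.exp (l * α - c * β) with ha_def
  have ha : 0 < a := Real.exp_pos _
  have hZ := freedman_supermartingale μ S ℱ hS R hR hbdd l c hl hlR hc_def
  have hmax := supermax μ ℱ _ hZ (fun k ω => le_of_lt (Real.exp_pos _)) m a ha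
  have hint1 : (∫ ω, Real.exp (l * (S 0 ω - S 0 ω) -
      c * ∑ i ∈ Finset.range 0, (μ[fun ω' => (S (i + 1) ω' - S i ω') ^ 2|ℱ i]) ω) ∂μ) = 1 := by
    simp
  rw [hint1] at hmax
  have hsub : {ω | ∃ k ≤ m, α ≤ S k ω - S 0 ω ∧
      (∑ i ∈ Finset.range k, (μ[fun ω' => (S (i + 1) ω' - S i ω') ^ 2 | ℱ i]) ω) ≤ β} ⊆
      {ω | ∃ k ≤ m, a ≤ Real.exp (l * (S k ω - S 0 ω) -
        c * ∑ i ∈ Finset.range k, (μ[fun ω' => (S (i + 1) ω' - S i ω') ^ 2|ℱ i]) ω)} := by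
    rintro ω ⟨k, hk, h1, h2⟩
    refine ⟨k, hk, ?_⟩
    rw [ha_def]
    apply Real.exp_le_exp.2
    have := mul_le_mul_of_nonneg_left h1 (le_of_lt hl)
    have := mul_le_mul_of_nonneg_left h2 (le_of_lt hc0)
    linarith
  have hmono : (μ {ω | ∃ k ≤ m, α ≤ S k ω - S 0 ω ∧
      (∑ i ∈ Finset.range k, (μ[fun ω' => (S (i + 1) ω' - S i ω') ^ 2 | ℱ i]) ω) ≤ β}).toReal ≤
      (μ {ω | ∃ k ≤ m, a ≤ Real.exp (l * (S k ω - S 0 ω) -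
        c * ∑ i ∈ Finset.range k, (μ[fun ω' => (S (i + 1) ω' - S i ω') ^ 2|ℱ i]) ω)}).toReal :=
    ENNReal.toReal_mono (measure_ne_top _ _) (measure_mono hsub)
  have harith : l * α - c * β = α^2 / (2*(β + R * α)) := by
    rw [hc_def, hl_def]
    have h1 : (1:ℝ) - α / (β + R * α) * R = β / (β + R * α) := by
      field_simp
      ring
    rw [h1]
    field_simp
    ring
  have hfin : (μ {ω | ∃ k ≤ m, a ≤ Real.exp (l * (S k ω - S 0 ω) -
        c * ∑ i ∈ Finset.range k, (μ[fun ω' => (S (i + 1) ω' - S i ω') ^ 2|ℱ i]) ω)}).toReal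
      ≤ Real.exp (-α ^ 2 / (2 * (β + R * α))) := by
    have : Real.exp (-α ^ 2 / (2 * (β + R * α))) = 1 / a := by
      rw [ha_def, harith, one_div, ← Real.exp_neg, neg_div]
    rw [this, le_div_iff₀ ha, mul_comm]
    exact hmax
  exact le_trans hmono hfin
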